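/- arXiv:1312.5634 — 2 statements merged into one kernel-verified Lean document; each statement's English description precedes it below -/
import Mathlib

section
/- The 4×4 matrix U with rows (1,1,0,0), (1,0,1,0), (0,1,0,1), (0,0,1,1) has rank 3 but does not admit a factorization U = A·B with A a nonnegative 4×3 matrix and B a nonnegative 3×4 matrix; i.e., its nonnegative rank is 4. -/
open Matrix Finset

/-- The support cells of the matrix `U`. -/
def nnrCells : Finset (Fin 4 × Fin 4) :=
  {(0,0),(0,1),(1,0),(1,2),(2,1),(2,3),(3,2),(3,3)}

/-- Any combinatorial rectangle avoiding the zero pattern of `U` covers at most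
two support cells. -/
lemma nnr_key (r c : Fin 4 → Bool)
    (h : ¬(r 0 ∧ c 2) ∧ ¬(r 0 ∧ c 3) ∧ ¬(r 1 ∧ c 1) ∧ ¬(r 1 ∧ c 3) ∧
         ¬(r 2 ∧ c 0) ∧ ¬(r 2 ∧ c 2) ∧ ¬(r 3 ∧ c 0) ∧ ¬(r 3 ∧ c 1)) :
    (nnrCells.filter (fun p => r p.1 ∧ c p.2)).card ≤ 2 := by
  revert h; revert r c; decide

theorem stmt_0 :
    (!![1,1,0,0; 1,0,1,0; 0,1,0,1; 0,0,1,1] : Matrix (Fin 4) (Fin 4) ℝ).rank = 3 ∧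
    ¬ ∃ (A : Matrix (Fin 4) (Fin 3) ℝ) (B : Matrix (Fin 3) (Fin 4) ℝ),
        (∀ i k, 0 ≤ A i k) ∧ (∀ k j, 0 ≤ B k j) ∧
        (!![1,1,0,0; 1,0,1,0; 0,1,0,1; 0,0,1,1] : Matrix (Fin 4) (Fin 4) ℝ) = A * B := by
  set U : Matrix (Fin 4) (Fin 4) ℝ := !![1,1,0,0; 1,0,1,0; 0,1,0,1; 0,0,1,1] with hUdef
  constructor
  · -- rank = 3
    have hle : U.rank ≤ 3 := by
      have hfac : U = (!![1,0,0;0,1,0;0,0,1;-1,1,1] : Matrix (Fin 4) (Fin 3) ℝ) *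
          (!![1,1,0,0; 1,0,1,0; 0,1,0,1] : Matrix (Fin 3) (Fin 4) ℝ) := by
        ext i j
        fin_cases i <;> fin_cases j <;>
          norm_num [hUdef, Matrix.mul_apply, Fin.sum_univ_succ, Matrix.vecHead, Matrix.vecTail]
      calc U.rank ≤ (!![1,0,0;0,1,0;0,0,1;-1,1,1] : Matrix (Fin 4) (Fin 3) ℝ).rank := by
              rw [hfac]; exact Matrix.rank_mul_le_left _ _
        _ ≤ Fintype.card (Fin 3) := Matrix.rank_le_card_width _
        _ = 3 := by simp
    have hge : 3 ≤ U.rank := by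
      have hfac : (!![1,0,0,0;0,1,0,0;0,0,1,0] : Matrix (Fin 3) (Fin 4) ℝ) *
          (U * (!![1,0,0,0;0,1,0,0;0,0,1,0] : Matrix (Fin 3) (Fin 4) ℝ)ᵀ) =
          (!![1,1,0;1,0,1;0,1,0] : Matrix (Fin 3) (Fin 3) ℝ) := by
        ext i j
        fin_cases i <;> fin_cases j <;>
          norm_num [hUdef, Matrix.mul_apply, Fin.sum_univ_succ, Matrix.vecHead, Matrix.vecTail,
            Matrix.transpose_apply, Matrix.vecMul, dotProduct, Matrix.cons_val]
      have hunit : IsUnit (!![1,1,0;1,0,1;0,1,0] : Matrix (Fin 3) (Fin 3) ℝ) := by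
        rw [Matrix.isUnit_iff_isUnit_det]
        simp [Matrix.det_fin_three]
      calc (3 : ℕ) = Fintype.card (Fin 3) := by simp
        _ = (!![1,1,0;1,0,1;0,1,0] : Matrix (Fin 3) (Fin 3) ℝ).rank :=
            (Matrix.rank_of_isUnit _ hunit).symm
        _ = ((!![1,0,0,0;0,1,0,0;0,0,1,0] : Matrix (Fin 3) (Fin 4) ℝ) *
            (U * (!![1,0,0,0;0,1,0,0;0,0,1,0] : Matrix (Fin 3) (Fin 4) ℝ)ᵀ)).rank := by
              rw [hfac]
        _ ≤ (U * (!![1,0,0,0;0,1,0,0;0,0,1,0] : Matrix (Fin 3) (Fin 4) ℝ)ᵀ).rank :=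
            Matrix.rank_mul_le_right _ _
        _ ≤ U.rank := Matrix.rank_mul_le_left _ _
    omega
  · -- no nonnegative rank-3 factorization
    rintro ⟨A, B, hA, hB, hU⟩
    classical
    -- zero entries of U kill all products
    have hzero : ∀ (k : Fin 3) (i j : Fin 4), U i j = 0 → ¬(0 < A i k ∧ 0 < B k j) := by
      rintro k i j h0 ⟨h1, h2⟩
      have hterm : A i k * B k j ≤ ∑ l, A i l * B l j :=
        Finset.single_le_sum (fun l _ => mul_nonneg (hA i l) (hB l j)) (Finset.mem_univ k)
      rw [← Matrix.mul_apply, ← hU, h0] at hterm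
      exact absurd (lt_of_lt_of_le (mul_pos h1 h2) hterm) (lt_irrefl 0)
    -- positive entries give a positive product
    have hpos : ∀ p ∈ nnrCells, ∃ k : Fin 3, 0 < A p.1 k ∧ 0 < B k p.2 := by
      intro p hp
      have h1 : 0 < ∑ l, A p.1 l * B l p.2 := by
        rw [← Matrix.mul_apply, ← hU]
        fin_cases hp <;> simp [hUdef]
      obtain ⟨k, _, hk⟩ := Finset.exists_lt_of_sum_lt (by simpa using h1 :
        ∑ l : Fin 3, (0 : ℝ) < ∑ l, A p.1 l * B l p.2)
      rcases mul_pos_iff.mp hk with ⟨ha, hb⟩ | ⟨ha, _⟩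
      · exact ⟨k, ha, hb⟩
      · exact absurd ha (not_lt.mpr (hA p.1 k))
    -- the rectangles
    set S : Fin 3 → Finset (Fin 4 × Fin 4) :=
      fun k => nnrCells.filter (fun p => 0 < A p.1 k ∧ 0 < B k p.2) with hSdef
    have hcard : ∀ k, (S k).card ≤ 2 := by
      intro k
      have heq : S k = nnrCells.filter
          (fun p => (fun i => decide (0 < A i k)) p.1 ∧ (fun j => decide (0 < B k j)) p.2) := by
        apply Finset.filter_congr
        intro p _
        simp
      rw [heq]
      apply nnr_key (fun i => decide (0 < A i k)) (fun j => decide (0 < B k j))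
      refine ⟨?_, ?_, ?_, ?_, ?_, ?_, ?_, ?_⟩ <;>
        · simp only [decide_eq_true_eq]
          apply hzero k
          simp [hUdef]
    have hsub : nnrCells ⊆ S 0 ∪ S 1 ∪ S 2 := by
      intro p hp
      obtain ⟨k, hk⟩ := hpos p hp
      fin_cases k <;> simp only [Finset.mem_union, hSdef, Finset.mem_filter] <;> tauto
    have h8 : nnrCells.card = 8 := by decide
    have hle : nnrCells.card ≤ 6 := by
      calc nnrCells.card ≤ (S 0 ∪ S 1 ∪ S 2).card := Finset.card_le_card hsub
        _ ≤ (S 0 ∪ S 1).card + (S 2).card := Finset.card_union_le _ _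
        _ ≤ (S 0).card + (S 1).card + (S 2).card := by
            have := Finset.card_union_le (S 0) (S 1); omega
        _ ≤ 6 := by have := hcard 0; have := hcard 1; have := hcard 2; omega
    omega
end

section
/- A nonnegative m×n real matrix P of rank r admits a nonnegative factorization P = A·B with A of size m×r and B of size r×n if and only if there exists a polytope Δ with at most r vertices such that B(P) ⊆ Δ ⊆ A(P), where A(P) = span(P) ∩ Δ_{m-1} and B(P) = cone(P) ∩ Δ_{m-1}. -/
/-- The polytope `𝒜 = span(P) ∩ Δ_{m-1}`: linear span of the columns of `P`
intersected with the standard simplex. -/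
def spanSimplex {m n : ℕ} (P : Matrix (Fin m) (Fin n) ℝ) : Set (Fin m → ℝ) :=
  (Submodule.span ℝ (Set.range fun j => fun i => P i j) : Set (Fin m → ℝ)) ∩
    stdSimplex ℝ (Fin m)

/-- The polytope `ℬ = cone(P) ∩ Δ_{m-1}`: nonnegative cone of the columns of `P`
intersected with the standard simplex. -/
def coneSimplex {m n : ℕ} (P : Matrix (Fin m) (Fin n) ℝ) : Set (Fin m → ℝ) :=
  {x | ∃ c : Fin n → ℝ, (∀ j, 0 ≤ c j) ∧ x = fun i => ∑ j, c j * P i j} ∩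
    stdSimplex ℝ (Fin m)

open Finset in
lemma sum_extend_zero {α β M : Type*} [Fintype α] [Fintype β] [DecidableEq β]
    [AddCommMonoid M] (f : α ↪ β) (g : α → M) :
    ∑ k, Function.extend f g 0 k = ∑ v, g v := by
  classical
  rw [show (Finset.univ : Finset β) = Finset.univ.image f ∪ (Finset.univ \ Finset.univ.image f) by
    simp [Finset.union_sdiff_of_subset]]
  rw [Finset.sum_union (Finset.disjoint_sdiff)]
  have h1 : ∑ k ∈ Finset.univ.image f, Function.extend f g 0 k = ∑ v, g v := by
    rw [Finset.sum_image (by intro a _ b _ h; exact f.injective h)]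
    exact Finset.sum_congr rfl fun a _ => f.injective.extend_apply g 0 a
  have h2 : ∑ k ∈ Finset.univ \ Finset.univ.image f, Function.extend f g 0 k = 0 := by
    apply Finset.sum_eq_zero
    intro k hk
    rw [Finset.mem_sdiff, Finset.mem_image] at hk
    rw [Function.extend_apply' _ _ _ (by
      rintro ⟨a, rfl⟩; exact hk.2 ⟨a, Finset.mem_univ a, rfl⟩)]
    rfl
  rw [h1, h2, add_zero]

theorem stmt_4 (m n r : ℕ) (P : Matrix (Fin m) (Fin n) ℝ)
    (hP : ∀ i j, 0 ≤ P i j) (hrank : P.rank = r)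
    (hcol : ∀ j, ∃ i, P i j ≠ 0) :
    (∃ (A : Matrix (Fin m) (Fin r) ℝ) (B : Matrix (Fin r) (Fin n) ℝ),
        (∀ i k, 0 ≤ A i k) ∧ (∀ k j, 0 ≤ B k j) ∧ P = A * B)
      ↔ ∃ V : Finset (Fin m → ℝ), V.card ≤ r ∧
          coneSimplex P ⊆ convexHull ℝ (V : Set (Fin m → ℝ)) ∧
          convexHull ℝ (V : Set (Fin m → ℝ)) ⊆ spanSimplex P := by
  classical
  constructor
  · rintro ⟨A, B, hA, hB, hPAB⟩
    -- column sums of A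
    set t : Fin r → ℝ := fun k => ∑ i, A i k with ht
    have ht0 : ∀ k, 0 ≤ t k := fun k => Finset.sum_nonneg fun i _ => hA i k
    -- columns with positive sum
    set K : Finset (Fin r) := Finset.univ.filter (fun k => 0 < t k) with hK
    -- zero-sum columns are zero
    have hz : ∀ k, k ∉ K → ∀ i, A i k = 0 := by
      intro k hk i
      have htk : t k = 0 := by
        rcases lt_or_eq_of_le (ht0 k) with h | h
        · exact absurd (Finset.mem_filter.mpr ⟨Finset.mem_univ k, h⟩) hk
        · exact h.symm
      have := Finset.sum_eq_zero_iff_of_nonneg (fun i _ => hA i k) |>.mp htk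
      exact this i (Finset.mem_univ i)
    -- span of columns of P = span of columns of A
    have hPle : (Submodule.span ℝ (Set.range fun j => fun i => P i j)) ≤
        Submodule.span ℝ (Set.range fun k => fun i => A i k) := by
      rw [Submodule.span_le]
      rintro _ ⟨j, rfl⟩
      show (fun i => P i j) ∈ (Submodule.span ℝ (Set.range fun k => fun i => A i k) : Set _)
      have : (fun i => P i j) = ∑ k, B k j • (fun i => A i k) := by
        funext i
        rw [hPAB]
        simp [Matrix.mul_apply, Finset.sum_apply, mul_comm]
      rw [this]
      exact Submodule.sum_mem _ fun k _ =>
        Submodule.smul_mem _ _ (Submodule.subset_span ⟨k, rfl⟩)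
    have hspan : (Submodule.span ℝ (Set.range fun k => fun i => A i k)) =
        Submodule.span ℝ (Set.range fun j => fun i => P i j) := by
      haveI : FiniteDimensional ℝ
          (Submodule.span ℝ (Set.range fun k : Fin r => fun i => A i k)) :=
        FiniteDimensional.span_of_finite ℝ (Set.finite_range _)
      refine (Submodule.eq_of_le_of_finrank_le hPle ?_).symm
      have h1 : Module.finrank ℝ
          (Submodule.span ℝ (Set.range fun k : Fin r => fun i => A i k)) ≤ r := by
        have := finrank_span_le_card (R := ℝ) (Set.range fun k : Fin r => fun i => A i k)
        refine this.trans ?_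
        rw [Set.toFinset_card]
        exact (Fintype.card_range_le _).trans (by simp)
      have h2 : Module.finrank ℝ
          (Submodule.span ℝ (Set.range fun j => fun i => P i j)) = r := by
        have := P.rank_eq_finrank_span_cols
        rw [hrank] at this
        exact this.symm
      rw [h2]; exact h1
    refine ⟨K.image (fun k => fun i => A i k / t k), ?_, ?_, ?_⟩
    · exact (Finset.card_image_le).trans (by simpa using K.card_le_univ.trans (by simp))
    · -- coneSimplex ⊆ convexHull V
      rintro x ⟨⟨c, hc, hx⟩, hxs⟩
      set w : Fin r → ℝ := fun k => (∑ j, c j * B k j) * t k with hw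
      have hw0 : ∀ k, 0 ≤ w k := fun k =>
        mul_nonneg (Finset.sum_nonneg fun j _ => mul_nonneg (hc j) (hB k j)) (ht0 k)
      -- x = ∑ k, (∑ j, c j * B k j) • colA k
      have hxA : ∀ i, x i = ∑ k, (∑ j, c j * B k j) * A i k := by
        intro i
        rw [hx]
        simp only
        rw [hPAB]
        simp only [Matrix.mul_apply, Finset.mul_sum]
        rw [Finset.sum_comm]
        congr 1; funext k
        rw [Finset.sum_mul]
        congr 1; funext j
        ring
      have hsum1 : ∑ k ∈ K, w k = 1 := by
        have h1 : ∑ i, x i = 1 := hxs.2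
        have : ∑ i, x i = ∑ k, w k := by
          simp only [hxA]
          rw [Finset.sum_comm]
          congr 1; funext k
          rw [hw, ← Finset.mul_sum]
        rw [this] at h1
        rw [← h1]
        refine Finset.sum_subset (Finset.subset_univ K) ?_
        intro k _ hk
        rw [hw]
        have : t k = 0 := by
          have := hz k hk
          simp [ht, this]
        simp [this]
      have hcm : x = ∑ k ∈ K, w k • (fun i => A i k / t k) := by
        funext i
        rw [Finset.sum_apply, hxA i]
        rw [show (∑ k, (∑ j, c j * B k j) * A i k) =
            ∑ k ∈ K, (∑ j, c j * B k j) * A i k by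
          symm
          apply Finset.sum_subset (Finset.subset_univ K)
          intro k _ hk
          simp [hz k hk i]]
        apply Finset.sum_congr rfl
        intro k hk
        have htk : 0 < t k := (Finset.mem_filter.mp hk).2
        simp only [Pi.smul_apply, smul_eq_mul, hw]
        field_simp
      rw [hcm]
      have h01 : (0:ℝ) < 1 := one_pos
      rw [← hsum1] at h01
      have := Finset.centerMass_mem_convexHull (t := K) (w := w)
        (z := fun k => fun i => A i k / t k)
        (hw₀ := fun k _ => hw0 k) (hws := h01)
        (hz := fun k hk => Finset.mem_coe.mpr (Finset.mem_image_of_mem _ hk))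
      rwa [Finset.centerMass_eq_of_sum_1 _ _ hsum1] at this
    · -- convexHull V ⊆ spanSimplex
      apply convexHull_min
      · rintro _ hy
        rw [Finset.mem_coe, Finset.mem_image] at hy
        obtain ⟨k, hk, rfl⟩ := hy
        have htk : 0 < t k := (Finset.mem_filter.mp hk).2
        constructor
        · have hcol : (fun i => A i k) ∈
              Submodule.span ℝ (Set.range fun j => fun i => P i j) := by
            rw [← hspan]
            exact Submodule.subset_span ⟨k, rfl⟩
          have : (fun i => A i k / t k) = (t k)⁻¹ • (fun i => A i k) := by
            funext i; simp [div_eq_inv_mul]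
          rw [this]
          exact Submodule.smul_mem _ _ hcol
        · constructor
          · intro i; exact div_nonneg (hA i k) (ht0 k)
          · rw [← Finset.sum_div]
            exact div_self htk.ne'
      · exact Convex.inter (Submodule.span ℝ _).convex (convex_stdSimplex ℝ _)
  · rintro ⟨V, hcard, hBV, hVA⟩
    -- V elements are in the standard simplex
    have hVs : ∀ v ∈ V, v ∈ stdSimplex ℝ (Fin m) := fun v hv =>
      (hVA (subset_convexHull ℝ _ hv)).2
    -- embedding of V into Fin r
    obtain ⟨f⟩ : Nonempty ({x // x ∈ V} ↪ Fin r) :=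
      Function.Embedding.nonempty_of_card_le (by simpa [Fintype.card_coe] using hcard)
    -- column sums of P
    set s : Fin n → ℝ := fun j => ∑ i, P i j with hs
    have hs0 : ∀ j, 0 < s j := by
      intro j
      obtain ⟨i, hi⟩ := hcol j
      have : 0 < P i j := lt_of_le_of_ne (hP i j) (Ne.symm hi)
      exact Finset.sum_pos' (fun i _ => hP i j) ⟨i, Finset.mem_univ i, this⟩
    -- normalized columns are in coneSimplex
    have hq : ∀ j, (fun i => P i j / s j) ∈ coneSimplex P := by
      intro j
      refine ⟨⟨fun j' => if j' = j then (s j)⁻¹ else 0, ?_, ?_⟩, ?_, ?_⟩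
      · intro j'; dsimp only; split_ifs
        · exact inv_nonneg.mpr (hs0 j).le
        · exact le_rfl
      · funext i
        simp only
        rw [Finset.sum_eq_single j]
        · simp [div_eq_inv_mul, mul_comm]
        · intro b _ hb; simp [hb]
        · intro h; exact absurd (Finset.mem_univ j) h
      · intro i; exact div_nonneg (hP i j) (hs0 j).le
      · rw [← Finset.sum_div]; exact div_self (hs0 j).ne'
    -- weights for each normalized column
    have hw : ∀ j, ∃ w : (Fin m → ℝ) → ℝ, (∀ y ∈ V, 0 ≤ w y) ∧ ∑ y ∈ V, w y = 1 ∧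
        ∑ y ∈ V, w y • y = (fun i => P i j / s j) := by
      intro j
      exact Finset.mem_convexHull'.mp (hBV (hq j))
    choose w hw0 hw1 hwx using hw
    refine ⟨fun i k => Function.extend f (fun v => (v : Fin m → ℝ) i) 0 k,
      fun k j => s j * Function.extend f (fun v => w j (v : Fin m → ℝ)) 0 k, ?_, ?_, ?_⟩
    · intro i k
      dsimp only
      by_cases h : ∃ v, f v = k
      · obtain ⟨v, rfl⟩ := h
        rw [f.injective.extend_apply]
        exact (hVs v v.2).1 i
      · rw [Function.extend_apply' _ _ _ h]
        simp
    · intro k j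
      dsimp only
      apply mul_nonneg (hs0 j).le
      by_cases h : ∃ v, f v = k
      · obtain ⟨v, rfl⟩ := h
        rw [f.injective.extend_apply]
        exact hw0 j v v.2
      · rw [Function.extend_apply' _ _ _ h]
        simp
    · ext i j
      erw [Matrix.mul_apply]
      symm
      have hterm : ∀ k, (Function.extend f (fun v => (v : Fin m → ℝ) i) 0 k) *
          (s j * Function.extend f (fun v => w j (v : Fin m → ℝ)) 0 k) =
          Function.extend f (fun v => (v : Fin m → ℝ) i * (s j * w j (v : Fin m → ℝ))) 0 k := by
        intro k
        by_cases h : ∃ v, f v = k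
        · obtain ⟨v, rfl⟩ := h
          rw [f.injective.extend_apply, f.injective.extend_apply, f.injective.extend_apply]
        · rw [Function.extend_apply' _ _ _ h, Function.extend_apply' _ _ _ h,
            Function.extend_apply' _ _ _ h]
          simp
      calc ∑ k, (Function.extend f (fun v => (v : Fin m → ℝ) i) 0 k) *
            (s j * Function.extend f (fun v => w j (v : Fin m → ℝ)) 0 k)
          = ∑ k, Function.extend f
              (fun v => (v : Fin m → ℝ) i * (s j * w j (v : Fin m → ℝ))) 0 k := by
            exact Finset.sum_congr rfl fun k _ => hterm k
        _ = ∑ v : {x // x ∈ V}, (v : Fin m → ℝ) i * (s j * w j (v : Fin m → ℝ)) :=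
            sum_extend_zero f _
        _ = ∑ y ∈ V, y i * (s j * w j y) := by
            rw [← Finset.sum_attach V (fun y => y i * (s j * w j y)),
              Finset.univ_eq_attach]
        _ = s j * ∑ y ∈ V, w j y * y i := by
            rw [Finset.mul_sum]; exact Finset.sum_congr rfl fun y _ => by ring
        _ = s j * (∑ y ∈ V, w j y • y) i := by
            rw [Finset.sum_apply]; rfl
        _ = P i j := by
            rw [hwx j]
            show s j * (P i j / s j) = P i j
            rw [mul_div_cancel₀ _ (hs0 j).ne']
end
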